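/- Let Γ be a Bieberbach-type subgroup of the affine group of ℝⁿ with parameters (n, q), with u_γ ∈ (1/q)ℤⁿ for every γ ∈ Γ. Let s be an integer with s ≡ 1 (mod q), and let φ: Γ → Γ be a group homomorphism such that g_{φ(γ)} = g_γ for all γ ∈ Γ and φ sends the translation by m to the translation by s·m for every m ∈ ℤⁿ. Define θ_γ := s•u_γ − u_{φ(γ)}. Then for all γ, δ ∈ Γ: (i) θ_γ ∈ ℤⁿ; (ii) if g_γ = g_δ then θ_γ = θ_δ; (iii) θ_{γδ} = g_γ(θ_δ) + θ_γ. -/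

import Mathlib

open Matrix

noncomputable section

abbrev Aff (n : ℕ) := (Fin n → ℝ) ≃ᵃ[ℝ] (Fin n → ℝ)

/-- `ℤⁿ` as a subset of `ℝⁿ`. -/
def intVec (n : ℕ) : Set (Fin n → ℝ) := {v | ∀ i, ∃ m : ℤ, v i = m}

/-- `(1/q)ℤⁿ` as a subset of `ℝⁿ`. -/
def qIntVec (n q : ℕ) : Set (Fin n → ℝ) := {v | ∀ i, ∃ m : ℤ, (q : ℝ) * v i = m}

/-- The translation part `u_γ` of an affine bijection. -/
def uPart {n : ℕ} (γ : Aff n) : Fin n → ℝ := γ 0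

/-- The linear part `g_γ` of an affine bijection. -/
def gPart {n : ℕ} (γ : Aff n) : (Fin n → ℝ) →ₗ[ℝ] (Fin n → ℝ) := γ.linear

/-- A linear map lies in `GLₙ(ℤ)` if it is given by an integer matrix invertible over `ℤ`. -/
def IsIntegralGL {n : ℕ} (f : (Fin n → ℝ) →ₗ[ℝ] (Fin n → ℝ)) : Prop :=
  ∃ M : Matrix (Fin n) (Fin n) ℤ, IsUnit M ∧ ∀ x, f x = (M.map (Int.cast : ℤ → ℝ)) *ᵥ x

/-- The subgroup of translations by integer vectors. -/
def intTranslations (n : ℕ) : Subgroup (Aff n) where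
  carrier := {γ | ∃ m ∈ intVec n, ∀ x, γ x = x + m}
  one_mem' := ⟨0, fun i => ⟨0, by simp⟩, fun x => by simp [AffineEquiv.one_def]⟩
  mul_mem' := by
    rintro a b ⟨ma, hma, ha⟩ ⟨mb, hmb, hb⟩
    refine ⟨mb + ma, fun i => ?_, fun x => ?_⟩
    · obtain ⟨p, hp⟩ := hma i; obtain ⟨r, hr⟩ := hmb i
      exact ⟨r + p, by simp [Pi.add_apply, hp, hr]⟩
    · simp [AffineEquiv.coe_mul, Function.comp, hb, ha, add_assoc]
  inv_mem' := by
    rintro a ⟨m, hm, ha⟩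
    refine ⟨-m, fun i => ?_, fun x => ?_⟩
    · obtain ⟨p, hp⟩ := hm i; exact ⟨-p, by simp [hp]⟩
    · have : a (x + -m) = x := by rw [ha]; abel
      calc a⁻¹ x = a⁻¹ (a (x + -m)) := by rw [this]
      _ = x + -m := by rw [AffineEquiv.inv_def, AffineEquiv.symm_apply_apply]

/-- A Bieberbach-type subgroup of the affine group of `ℝⁿ` with parameters `(n, q)`. -/
structure IsBieberbach {n : ℕ} (Γ : Subgroup (Aff n)) (q : ℕ) : Prop where
  /-- every element has linear part in `GLₙ(ℤ)` -/
  integral : ∀ γ ∈ Γ, IsIntegralGL (gPart γ)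
  /-- elements with identity linear part are integer translations -/
  trans_of_linear_id : ∀ γ ∈ Γ, γ.linear = LinearEquiv.refl ℝ (Fin n → ℝ) → γ ∈ intTranslations n
  /-- all integer translations belong to `Γ` -/
  trans_le : intTranslations n ≤ Γ
  /-- the integer translations have index `q` in `Γ` -/
  index_eq : ((intTranslations n).subgroupOf Γ).index = q



section ThetaAux

lemma aff_apply' {n : ℕ} (γ : Aff n) (x : Fin n → ℝ) : γ x = γ.linear x + γ 0 := by
  have h := γ.map_vadd 0 x
  simpa [vadd_eq_add] using h

lemma linear_mul' {n : ℕ} (γ δ : Aff n) : (γ * δ).linear = γ.linear * δ.linear :=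
  map_mul AffineEquiv.linearHom γ δ

lemma linear_inv' {n : ℕ} (γ : Aff n) : (γ⁻¹).linear = (γ.linear)⁻¹ :=
  map_inv AffineEquiv.linearHom γ

end ThetaAux

/-- **The crossed homomorphism `θ`** (Farrell–Gogolev, proof of Proposition 3): let `Γ`
be a Bieberbach-type subgroup with parameters `(n, q)` whose translation parts lie in
`(1/q)ℤⁿ`, let `s ≡ 1 (mod q)` be an integer, and `φ : Γ → Γ` a homomorphism fixing
linear parts and sending the translation by `m ∈ ℤⁿ` to the translation by `s·m`.
Define `θ_γ := s•u_γ − u_{φ(γ)}`. Then (i) `θ_γ ∈ ℤⁿ`; (ii) `θ_γ` depends only on the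
linear part `g_γ`; (iii) `θ_{γδ} = g_γ(θ_δ) + θ_γ`. -/
theorem theta_crossedHom {n q : ℕ} (hq : 0 < q) (Γ : Subgroup (Aff n))
    (hΓ : IsBieberbach Γ q)
    (hu : ∀ γ ∈ Γ, uPart γ ∈ qIntVec n q)
    (s : ℤ) (hs1 : s ≡ 1 [ZMOD (q : ℤ)])
    (φ : Γ →* Γ)
    (hφg : ∀ γ : Γ, gPart (φ γ : Aff n) = gPart (γ : Aff n))
    (hφt : ∀ (γ : Γ) (m : Fin n → ℝ), m ∈ intVec n → (∀ x, (γ : Aff n) x = x + m) →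
        ∀ x, (φ γ : Aff n) x = x + (s : ℝ) • m)
    (θ : Γ → Fin n → ℝ)
    (hθ : ∀ γ : Γ, θ γ = (s : ℝ) • uPart (γ : Aff n) - uPart (φ γ : Aff n)) :
    (∀ γ : Γ, θ γ ∈ intVec n) ∧
    (∀ γ δ : Γ, gPart (γ : Aff n) = gPart (δ : Aff n) → θ γ = θ δ) ∧
    (∀ γ δ : Γ, θ (γ * δ) = gPart (γ : Aff n) (θ δ) + θ γ) := by
  -- translation parts compose: u_{γδ} = g_γ u_δ + u_γ
  have humul : ∀ γ δ : Aff n, uPart (γ * δ) = gPart γ (uPart δ) + uPart γ := by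
    intro γ δ
    show (γ * δ) 0 = γ.linear (δ 0) + γ 0
    rw [AffineEquiv.coe_mul, Function.comp_apply, aff_apply' γ (δ 0)]
  -- equality of gPart gives equality of linear equivs
  have glin : ∀ γ δ : Aff n, gPart γ = gPart δ → γ.linear = δ.linear := by
    intro γ δ h
    exact LinearEquiv.toLinearMap_injective h
  -- key: for each γ, φ γ = γ * (translation by some m ∈ ℤⁿ)
  have key : ∀ γ : Γ, ∃ m ∈ intVec n,
      uPart (φ γ : Aff n) = gPart (γ : Aff n) m + uPart (γ : Aff n) := by
    intro γ
    set d : Γ := γ⁻¹ * φ γ with hd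
    have hd_lin : ((d : Aff n)).linear = LinearEquiv.refl ℝ (Fin n → ℝ) := by
      have h1 : ((φ γ : Γ) : Aff n).linear = (γ : Aff n).linear := glin _ _ (hφg γ)
      have h2 : (d : Aff n) = (γ : Aff n)⁻¹ * ((φ γ : Γ) : Aff n) := rfl
      rw [h2, linear_mul', linear_inv', h1]
      exact inv_mul_cancel _
    obtain ⟨m, hm, hdx⟩ := hΓ.trans_of_linear_id (d : Aff n) d.2 hd_lin
    refine ⟨m, hm, ?_⟩
    have hφγ : (φ γ : Γ) = γ * d := by rw [hd]; group
    have : ((φ γ : Γ) : Aff n) = (γ : Aff n) * (d : Aff n) := by rw [hφγ]; rfl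
    rw [show uPart ((φ γ : Γ) : Aff n) = ((φ γ : Γ) : Aff n) 0 from rfl, this]
    show ((γ : Aff n) * (d : Aff n)) 0 = (γ : Aff n).linear m + (γ : Aff n) 0
    rw [AffineEquiv.coe_mul, Function.comp_apply, hdx 0, zero_add, aff_apply']
  obtain ⟨k, hk⟩ : (q : ℤ) ∣ s - 1 := Int.ModEq.dvd hs1.symm
  refine ⟨?_, ?_, ?_⟩
  · -- (i) integrality
    intro γ i
    obtain ⟨m, hm, hphi⟩ := key γ
    obtain ⟨M, -, hM⟩ := hΓ.integral (γ : Aff n) γ.2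
    obtain ⟨a, ha⟩ := hu (γ : Aff n) γ.2 i
    choose b hb using hm
    refine ⟨k * a - ∑ j, M i j * b j, ?_⟩
    have hsum : gPart (γ : Aff n) m i = ((∑ j, M i j * b j : ℤ) : ℝ) := by
      rw [hM]
      simp only [Matrix.mulVec, dotProduct, Matrix.map_apply]
      push_cast
      exact Finset.sum_congr rfl fun j _ => by rw [hb j]
    have hs' : (s : ℝ) - 1 = (q : ℝ) * (k : ℝ) := by exact_mod_cast congrArg (Int.cast : ℤ → ℝ) hk
    have expand : θ γ i = ((s : ℝ) - 1) * uPart (γ : Aff n) i - gPart (γ : Aff n) m i := by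
      rw [hθ, hphi]
      simp only [Pi.sub_apply, Pi.add_apply, Pi.smul_apply, smul_eq_mul]
      ring
    rw [expand, hsum, hs']
    push_cast
    linear_combination (k : ℝ) * ha
  · -- (ii) dependence only on linear part
    intro γ δ hgd
    have hlin : (γ : Aff n).linear = (δ : Aff n).linear := glin _ _ hgd
    set η : Γ := γ * δ⁻¹ with hηdef
    have hη_lin : ((η : Aff n)).linear = LinearEquiv.refl ℝ (Fin n → ℝ) := by
      have h2 : (η : Aff n) = (γ : Aff n) * ((δ : Aff n))⁻¹ := rfl
      rw [h2, linear_mul', linear_inv', hlin]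
      exact mul_inv_cancel _
    obtain ⟨m, hm, hηx⟩ := hΓ.trans_of_linear_id (η : Aff n) η.2 hη_lin
    have hγ : γ = η * δ := by rw [hηdef]; group
    have huγ : uPart (γ : Aff n) = uPart (δ : Aff n) + m := by
      have : (γ : Aff n) = (η : Aff n) * (δ : Aff n) := by rw [hγ]; rfl
      rw [show uPart (γ : Aff n) = (γ : Aff n) 0 from rfl, this]
      show ((η : Aff n) * (δ : Aff n)) 0 = (δ : Aff n) 0 + m
      rw [AffineEquiv.coe_mul, Function.comp_apply, hηx ((δ : Aff n) 0)]
    have hφη := hφt η m hm hηx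
    have huφ : uPart (φ γ : Aff n) = uPart (φ δ : Aff n) + (s : ℝ) • m := by
      have hmul : φ γ = φ η * φ δ := by rw [hγ, MonoidHom.map_mul]
      have : ((φ γ : Γ) : Aff n) = ((φ η : Γ) : Aff n) * ((φ δ : Γ) : Aff n) := by
        rw [hmul]; rfl
      rw [show uPart ((φ γ : Γ) : Aff n) = ((φ γ : Γ) : Aff n) 0 from rfl, this]
      show (((φ η : Γ) : Aff n) * ((φ δ : Γ) : Aff n)) 0
          = ((φ δ : Γ) : Aff n) 0 + (s : ℝ) • m
      rw [AffineEquiv.coe_mul, Function.comp_apply, hφη (((φ δ : Γ) : Aff n) 0)]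
    rw [hθ γ, hθ δ, huγ, huφ, smul_add]
    abel
  · -- (iii) crossed homomorphism identity
    intro γ δ
    have h1 : uPart ((γ * δ : Γ) : Aff n)
        = gPart (γ : Aff n) (uPart (δ : Aff n)) + uPart (γ : Aff n) := humul _ _
    have h2 : uPart ((φ (γ * δ) : Γ) : Aff n)
        = gPart (γ : Aff n) (uPart ((φ δ : Γ) : Aff n)) + uPart ((φ γ : Γ) : Aff n) := by
      have hmul : φ (γ * δ) = φ γ * φ δ := MonoidHom.map_mul φ γ δ
      have : ((φ (γ * δ) : Γ) : Aff n) = ((φ γ : Γ) : Aff n) * ((φ δ : Γ) : Aff n) := by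
        rw [hmul]; rfl
      rw [this, humul, hφg γ]
    rw [hθ (γ * δ), hθ γ, hθ δ]
    have hco : ((γ * δ : Γ) : Aff n) = (γ : Aff n) * (δ : Aff n) := rfl
    rw [show uPart ((γ * δ : Γ) : Aff n) = uPart ((γ : Aff n) * (δ : Aff n)) from by rw [hco]] at h1 ⊢
    rw [h1, h2, smul_add, map_sub, _root_.map_smul]
    abel
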